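/- arXiv:1302.3323 — 4 statements merged into one kernel-verified Lean document; each statement's English description precedes it below -/
import Mathlib

section
/- For p > 1, the integral 2∫₀¹ dt/(1-t^p)^{1/p} equals 2π/(p·sin(π/p)). -/
open MeasureTheory Set intervalIntegral

/-- The real Beta integral `B(a, 1-a) = π / sin (π a)` for `0 < a < 1`. -/
lemma beta_reflection_aux (a : ℝ) (h0 : 0 < a) (h1 : a < 1) :
    ∫ x in (0:ℝ)..1, x ^ (a - 1) * (1 - x) ^ (-a) = Real.pi / Real.sin (Real.pi * a) := by
  have hb : Complex.betaIntegral a (1 - a) = Complex.Gamma a * Complex.Gamma (1 - a) := by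
    have h := Complex.Gamma_mul_Gamma_eq_betaIntegral
      (s := (a : ℂ)) (t := 1 - (a : ℂ)) (by simpa using h0)
      (by simp only [Complex.sub_re, Complex.one_re, Complex.ofReal_re]; linarith)
    rw [add_sub_cancel, Complex.Gamma_one, one_mul] at h
    exact h.symm
  have key : ((∫ x in (0:ℝ)..1, x ^ (a - 1) * (1 - x) ^ (-a) : ℝ) : ℂ)
      = Complex.betaIntegral a (1 - a) := by
    rw [← intervalIntegral.integral_ofReal, Complex.betaIntegral]
    refine intervalIntegral.integral_congr fun x hx => ?_
    rw [Set.uIcc_of_le (by norm_num : (0:ℝ) ≤ 1)] at hx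
    have hx0 : (0:ℝ) ≤ x := hx.1
    have hx1 : (0:ℝ) ≤ 1 - x := by linarith [hx.2]
    rw [Complex.ofReal_mul, Complex.ofReal_cpow hx0, Complex.ofReal_cpow hx1]
    push_cast
    ring_nf
  have hG : Complex.betaIntegral a (1 - a)
      = ((Real.Gamma a * Real.Gamma (1 - a) : ℝ) : ℂ) := by
    rw [hb, show ((1:ℂ) - a) = ((1 - a : ℝ) : ℂ) by push_cast; ring,
      Complex.Gamma_ofReal, Complex.Gamma_ofReal]
    push_cast
    ring
  have h2 : (∫ x in (0:ℝ)..1, x ^ (a - 1) * (1 - x) ^ (-a)) =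
      Real.Gamma a * Real.Gamma (1 - a) := by
    exact_mod_cast key.trans hG
  rw [h2, Real.Gamma_mul_Gamma_one_sub]

/-- For `p > 1`, the generalized π satisfies
`π_p = 2∫₀¹ (1 - t^p)^{-1/p} dt = 2π/(p sin(π/p))`. -/
theorem pi_p_integral (p : ℝ) (hp : 1 < p) :
    2 * ∫ t in (0:ℝ)..1, (1 - t ^ p) ^ (-(1 / p)) =
      2 * Real.pi / (p * Real.sin (Real.pi / p)) := by
  have hp0 : (0:ℝ) < p := by linarith
  have ha0 : (0:ℝ) < 1 / p := by positivity
  have ha1 : 1 / p < 1 := by rw [div_lt_one hp0]; linarith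
  set a : ℝ := 1 / p with ha_def
  set g : ℝ → ℝ := fun u => u ^ (a - 1) * (1 - u) ^ (-a) with hg_def
  set f : ℝ → ℝ := fun t => t ^ p with hf_def
  set f' : ℝ → ℝ := fun t => p * t ^ (p - 1) with hf'_def
  -- the key pointwise computation
  have hcomp : ∀ x : ℝ, 0 < x → (g ∘ f) x * f' x = p * (1 - x ^ p) ^ (-a) := by
    intro x hx
    simp only [hg_def, hf_def, hf'_def, Function.comp_apply]
    rw [← Real.rpow_mul hx.le, show p * (a - 1) = 1 - p by
      rw [ha_def]; field_simp]
    have h1 : x ^ (1 - p) * x ^ (p - 1) = 1 := by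
      rw [← Real.rpow_add hx]; norm_num
    calc x ^ (1 - p) * (1 - x ^ p) ^ (-a) * (p * x ^ (p - 1))
        = p * ((x ^ (1 - p) * x ^ (p - 1)) * (1 - x ^ p) ^ (-a)) := by ring
      _ = p * (1 - x ^ p) ^ (-a) := by rw [h1, one_mul]
  -- the integrand is dominated by `(1 - t) ^ (-a)`, hence interval integrable
  have hbound : IntervalIntegrable (fun t : ℝ => (1 - t) ^ (-a)) volume 0 1 := by
    have h := (intervalIntegrable_rpow' (a := 0) (b := 1)
      (r := -a) (by linarith)).comp_sub_left 1
    simpa using h.symm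
  have hmeas : Measurable fun t : ℝ => (1 - t ^ p) ^ (-a) := by fun_prop
  have hint : IntervalIntegrable (fun t : ℝ => (1 - t ^ p) ^ (-a)) volume 0 1 := by
    refine hbound.mono_fun hmeas.aestronglyMeasurable ?_
    filter_upwards [ae_restrict_mem measurableSet_uIoc] with t ht
    rw [Set.uIoc_of_le (by norm_num : (0:ℝ) ≤ 1)] at ht
    have h1 : (0:ℝ) ≤ 1 - t ^ p := by
      have : t ^ p ≤ 1 := Real.rpow_le_one ht.1.le ht.2 hp0.le
      linarith
    rw [Real.norm_eq_abs, Real.norm_eq_abs, abs_of_nonneg (Real.rpow_nonneg h1 _),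
      abs_of_nonneg (Real.rpow_nonneg (by linarith [ht.2] : (0:ℝ) ≤ 1 - t) _)]
    rcases eq_or_lt_of_le ht.2 with rfl | ht1'
    · simp
    · have htp : t ^ p ≤ t := by
        calc t ^ p ≤ t ^ (1:ℝ) :=
          Real.rpow_le_rpow_of_exponent_ge ht.1 ht.2 (by linarith)
        _ = t := Real.rpow_one t
      exact Real.rpow_le_rpow_of_nonpos (by linarith) (by linarith) (by linarith)
  -- integrability of the beta integrand on `[0,1]`
  have hbeta_int : IntegrableOn g (Icc (0:ℝ) 1) := by
    have hc := Complex.betaIntegral_convergent (u := (a : ℂ)) (v := 1 - (a : ℂ))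
      (by simpa using ha0)
      (by simp only [Complex.sub_re, Complex.one_re, Complex.ofReal_re]; linarith)
    rw [intervalIntegrable_iff', Set.uIcc_of_le (by norm_num : (0:ℝ) ≤ 1)] at hc
    have hre := hc.re
    refine MeasureTheory.IntegrableOn.congr_fun hre ?_ measurableSet_Icc
    intro x hx
    have hx0 : (0:ℝ) ≤ x := hx.1
    have hx1 : (0:ℝ) ≤ 1 - x := by linarith [hx.2]
    have heq : ((x : ℂ) ^ ((a : ℂ) - 1) * (1 - (x : ℂ)) ^ ((1 - (a : ℂ)) - 1))
        = ((g x : ℝ) : ℂ) := by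
      simp only [hg_def]
      rw [Complex.ofReal_mul, Complex.ofReal_cpow hx0, Complex.ofReal_cpow hx1]
      push_cast
      ring_nf
    rw [← Complex.ofReal_re (g x), ← heq]
    rfl
  have hf0 : f 0 = 0 := by simp [hf_def, Real.zero_rpow hp0.ne']
  have hf1 : f 1 = 1 := by simp [hf_def]
  have hmaps : ∀ t : ℝ, t ∈ Icc (0:ℝ) 1 → f t ∈ Icc (0:ℝ) 1 := fun t ht =>
    ⟨Real.rpow_nonneg ht.1 _, Real.rpow_le_one ht.1 ht.2 hp0.le⟩
  -- the substitution `u = t ^ p`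
  have hsub : (∫ t in (0:ℝ)..1, (g ∘ f) t * f' t) = ∫ u in (0:ℝ)..1, g u := by
    have h := intervalIntegral.integral_comp_mul_deriv''' (a := (0:ℝ)) (b := 1)
      (f := f) (f' := f') (g := g)
      (fun t _ => (Real.continuousAt_rpow_const t p (Or.inr hp0.le)).continuousWithinAt)
      (by
        intro t ht
        rw [min_eq_left (by norm_num : (0:ℝ) ≤ 1), max_eq_right (by norm_num : (0:ℝ) ≤ 1)] at ht
        exact (Real.hasDerivAt_rpow_const (Or.inl ht.1.ne')).hasDerivWithinAt)
      (by
        rw [min_eq_left (by norm_num : (0:ℝ) ≤ 1), max_eq_right (by norm_num : (0:ℝ) ≤ 1)]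
        have hsubset : f '' Ioo (0:ℝ) 1 ⊆ Ioo (0:ℝ) 1 := by
          rintro _ ⟨t, ht, rfl⟩
          exact ⟨Real.rpow_pos_of_pos ht.1 _, Real.rpow_lt_one ht.1.le ht.2 hp0⟩
        refine ContinuousOn.mono ?_ hsubset
        intro u hu
        refine ContinuousWithinAt.mul ?_ ?_
        · exact (Real.continuousAt_rpow_const u _ (Or.inl hu.1.ne')).continuousWithinAt
        · exact (((Real.continuousAt_rpow_const (1 - u) _
            (Or.inl (sub_ne_zero.mpr (ne_of_gt hu.2)))).comp
            ((continuous_const.sub continuous_id).continuousAt))).continuousWithinAt)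
      (by
        refine hbeta_int.mono_set ?_
        rw [Set.uIcc_of_le (by norm_num : (0:ℝ) ≤ 1)]
        rintro _ ⟨t, ht, rfl⟩
        exact hmaps t ht)
      (by
        rw [Set.uIcc_of_le (by norm_num : (0:ℝ) ≤ 1)]
        have hpint : IntegrableOn (fun t : ℝ => p * (1 - t ^ p) ^ (-a)) (Icc (0:ℝ) 1) := by
          have h2 := hint.const_mul p
          rwa [intervalIntegrable_iff', Set.uIcc_of_le (by norm_num : (0:ℝ) ≤ 1)] at h2
        refine hpint.congr ?_
        have hne : ∀ᵐ x : ℝ ∂(volume.restrict (Icc (0:ℝ) 1)), x ≠ 0 := by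
          refine ae_iff.mpr ?_
          have h3 : {x : ℝ | ¬ x ≠ 0} = {0} := by ext x; simp
          rw [h3, Measure.restrict_apply (measurableSet_singleton 0)]
          exact measure_mono_null Set.inter_subset_left (measure_singleton 0)
        filter_upwards [ae_restrict_mem measurableSet_Icc, hne] with x hx hx0
        exact (hcomp x (lt_of_le_of_ne hx.1 (Ne.symm hx0))).symm)
    rw [hf0, hf1] at h
    exact h
  have hieq : (∫ t in (0:ℝ)..1, (g ∘ f) t * f' t)
      = p * ∫ t in (0:ℝ)..1, (1 - t ^ p) ^ (-a) := by
    rw [← intervalIntegral.integral_const_mul]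
    refine intervalIntegral.integral_congr_ae ?_
    filter_upwards with x hx
    rw [Set.uIoc_of_le (by norm_num : (0:ℝ) ≤ 1)] at hx
    exact hcomp x hx.1
  have hJ : (∫ u in (0:ℝ)..1, g u) = Real.pi / Real.sin (Real.pi / p) := by
    rw [hg_def]
    have := beta_reflection_aux a ha0 ha1
    rwa [show Real.pi * a = Real.pi / p by rw [ha_def]; ring] at this
  have hpI : p * (∫ t in (0:ℝ)..1, (1 - t ^ p) ^ (-a))
      = Real.pi / Real.sin (Real.pi / p) := by
    rw [← hieq, hsub, hJ]
  have hsin : Real.sin (Real.pi / p) ≠ 0 := by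
    refine ne_of_gt (Real.sin_pos_of_pos_of_lt_pi ?_ ?_)
    · positivity
    · rw [div_lt_iff₀ hp0]
      nlinarith [Real.pi_pos]
  have hI : (∫ t in (0:ℝ)..1, (1 - t ^ p) ^ (-a))
      = Real.pi / Real.sin (Real.pi / p) / p := by
    rw [eq_div_iff hp0.ne', mul_comm]
    exact hpI
  rw [show -(1/p) = -a by rw [ha_def], hI]
  field_simp
end

section
/- If a differentiable function S on an interval satisfies |S(x)|^p + |S'(x)|^p = 1 and S'' exists with S' ≠ 0 at x, then (S')'(x) = -|S(x)/S'(x)|^{p-2} · S(x). -/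
open Real Filter

/-- Lemma 1.1(a): if `|S|^p + |S'|^p = 1` near `x`, `S` has derivative `S'`
near `x`, `S'` is differentiable at `x` with derivative `S'' x`, and `S' x ≠ 0`,
then `S'' x = -|S x / S' x|^{p-2} · S x`. -/
theorem deriv_of_Sp_deriv (p : ℝ) (hp : 1 < p) (S S' : ℝ → ℝ) (x : ℝ) (S''x : ℝ)
    (hS : ∀ᶠ t in nhds x, HasDerivAt S (S' t) t)
    (hS' : HasDerivAt S' S''x x)
    (hid : ∀ᶠ t in nhds x, |S t| ^ p + |S' t| ^ p = 1)
    (hne : S' x ≠ 0) :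
    S''x = -(|S x / S' x| ^ (p - 2)) * S x := by
  have hSx : HasDerivAt S (S' x) x := hS.self_of_nhds
  have h1 : HasDerivAt (fun t => |S t| ^ p) ((p * |S x| ^ (p - 2) * S x) * S' x) x :=
    (hasDerivAt_abs_rpow (S x) hp).comp x hSx
  have h2 : HasDerivAt (fun t => |S' t| ^ p) ((p * |S' x| ^ (p - 2) * S' x) * S''x) x :=
    (hasDerivAt_abs_rpow (S' x) hp).comp x hS'
  have h3 : HasDerivAt (fun t => |S t| ^ p + |S' t| ^ p) 0 x := by
    have := (hasDerivAt_const x (1:ℝ)).congr_of_eventuallyEq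
      (hid.mono fun t ht => ht)
    exact this
  have key : (p * |S x| ^ (p - 2) * S x) * S' x + (p * |S' x| ^ (p - 2) * S' x) * S''x = 0 :=
    (h1.add h2).unique h3
  have hppos : (0:ℝ) < p := by linarith
  have hS'abs : (0:ℝ) < |S' x| ^ (p - 2) := Real.rpow_pos_of_pos (abs_pos.2 hne) _
  have hdiv : |S x / S' x| ^ (p - 2) = |S x| ^ (p - 2) / |S' x| ^ (p - 2) := by
    rw [abs_div, Real.div_rpow (abs_nonneg _) (abs_nonneg _)]
  rw [hdiv]
  field_simp
  have hfactor : p * S' x * (|S' x| ^ (p - 2) * S''x + |S x| ^ (p - 2) * S x) = 0 := by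
    linarith [key]
  have := mul_eq_zero.1 hfactor
  rcases this with h | h
  · exact absurd (mul_eq_zero.1 h) (by push_neg; exact ⟨hppos.ne', hne⟩)
  · linarith
end

section
/- If S is twice differentiable, satisfies |S|^p + |S'|^p = 1, and (S')' = -|S/S'|^{p-2}·S wherever S' ≠ 0, then the derivative of S·(S')^{p-1} equals |S'|^p - (p-1)|S|^p at every point where S' ≠ 0. -/
lemma hasDerivAt_abs_rpow_mul (a : ℝ) {y : ℝ} (hy : y ≠ 0) :
    HasDerivAt (fun z : ℝ => |z| ^ a * z) ((a + 1) * |y| ^ a) y := by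
  rcases hy.lt_or_gt with h | h
  · -- y < 0
    have hne : -y ≠ 0 := neg_ne_zero.mpr hy
    have h1 : HasDerivAt (fun z : ℝ => ((-z) ^ (a + 1) : ℝ))
        ((a + 1) * (-y) ^ (a + 1 - 1) * (-1)) y :=
      (Real.hasDerivAt_rpow_const (x := -y) (p := a + 1) (Or.inl hne)).comp y (hasDerivAt_neg y)
    have h2 : HasDerivAt (fun z : ℝ => -((-z) ^ (a + 1) : ℝ)) ((a + 1) * |y| ^ a) y := by
      have : HasDerivAt (fun z : ℝ => -((-z) ^ (a + 1) : ℝ)) _ y := h1.neg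
      convert this using 1
      rw [add_sub_cancel_right, abs_of_neg h]
      ring
    refine h2.congr_of_eventuallyEq ?_
    filter_upwards [Iio_mem_nhds h] with z hz
    have hz' : -z ≠ 0 := neg_ne_zero.mpr (Set.mem_Iio.mp hz).ne
    rw [abs_of_neg (Set.mem_Iio.mp hz), Real.rpow_add_one hz']
    ring
  · -- y > 0
    have h1 : HasDerivAt (fun z : ℝ => (z ^ (a + 1) : ℝ))
        ((a + 1) * |y| ^ a) y := by
      have := Real.hasDerivAt_rpow_const (x := y) (p := a + 1) (Or.inl h.ne')
      convert this using 1
      rw [add_sub_cancel_right, abs_of_pos h]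
    refine h1.congr_of_eventuallyEq ?_
    filter_upwards [Ioi_mem_nhds h] with z hz
    rw [abs_of_pos (Set.mem_Ioi.mp hz), Real.rpow_add_one (Set.mem_Ioi.mp hz).ne']

/-- Lemma 1.1(b), derivative part: if `S` is twice differentiable, satisfies
`|S|^p + |S'|^p = 1`, and `(S')' = -|S/S'|^{p-2} S` wherever `S' ≠ 0`, then at
every point with `S' x ≠ 0` the function `S · (S')^{p-1} = S·|S'|^{p-2}S'` has
derivative `|S'|^p - (p-1)|S|^p`. -/
theorem deriv_S_mul_Sp (p : ℝ) (hp : 1 < p) (S S' S'' : ℝ → ℝ)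
    (hS : ∀ t, HasDerivAt S (S' t) t)
    (hS' : ∀ t, HasDerivAt S' (S'' t) t)
    (hid : ∀ t, |S t| ^ p + |S' t| ^ p = 1)
    (hode : ∀ t, S' t ≠ 0 → S'' t = -(|S t / S' t| ^ (p - 2)) * S t) :
    ∀ x, S' x ≠ 0 →
      HasDerivAt (fun t => S t * (|S' t| ^ (p - 2) * S' t))
        (|S' x| ^ p - (p - 1) * |S x| ^ p) x := by
  intro x hx
  have hg : HasDerivAt (fun t => |S' t| ^ (p - 2) * S' t)
      ((p - 2 + 1) * |S' x| ^ (p - 2) * S'' x) x :=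
    (hasDerivAt_abs_rpow_mul (p - 2) hx).comp x (hS' x)
  have hmul : HasDerivAt (fun t => S t * (|S' t| ^ (p - 2) * S' t)) _ x := (hS x).mul hg
  convert hmul using 1
  have habs : (0:ℝ) < |S' x| := abs_pos.mpr hx
  have h1 : S' x * (|S' x| ^ (p - 2) * S' x) = |S' x| ^ p := by
    have : S' x * S' x = |S' x| ^ (2:ℝ) := by
      rw [Real.rpow_two, sq_abs, sq]
    calc S' x * (|S' x| ^ (p - 2) * S' x)
        = |S' x| ^ (p - 2) * (S' x * S' x) := by ring
      _ = |S' x| ^ (p - 2) * |S' x| ^ (2:ℝ) := by rw [this]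
      _ = |S' x| ^ p := by rw [← Real.rpow_add habs]; norm_num
  have h2 : S x * ((p - 2 + 1) * |S' x| ^ (p - 2) * S'' x) = -((p - 1) * |S x| ^ p) := by
    rw [hode x hx]
    rcases eq_or_ne (S x) 0 with hS0 | hS0
    · simp [hS0, Real.zero_rpow (by positivity : p ≠ 0)]
    · have habsS : (0:ℝ) < |S x| := abs_pos.mpr hS0
      have hdiv : |S x / S' x| ^ (p - 2) = |S x| ^ (p - 2) / |S' x| ^ (p - 2) := by
        rw [abs_div, Real.div_rpow (abs_nonneg _) (abs_nonneg _)]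
      have hSsq : S x * S x = |S x| ^ (2:ℝ) := by
        rw [Real.rpow_two, sq_abs, sq]
      have key : |S' x| ^ (p - 2) * (|S x| ^ (p - 2) / |S' x| ^ (p - 2))
          = |S x| ^ (p - 2) :=
        mul_div_cancel₀ _ (Real.rpow_pos_of_pos habs _).ne'
      rw [hdiv]
      calc S x * ((p - 2 + 1) * |S' x| ^ (p - 2) *
              (-(|S x| ^ (p - 2) / |S' x| ^ (p - 2)) * S x))
          = -((S x * S x) * (|S' x| ^ (p - 2) * (|S x| ^ (p - 2) / |S' x| ^ (p - 2)))
              * (p - 1)) := by ring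
        _ = -(|S x| ^ (2:ℝ) * |S x| ^ (p - 2) * (p - 1)) := by rw [hSsq, key]
        _ = -((p - 1) * |S x| ^ p) := by
              rw [← Real.rpow_add habsS]; norm_num; ring
  rw [h1, h2]; ring
end

section
/- If u(x) = c(x)·S_p(λ^{2/p}θ(x)) and u'(x) = λ^{2/p}c(x)·S_p'(λ^{2/p}θ(x)) with u solving -( (u')^{p-1} )' = (p-1)(λ² - q(x) - 2λ r(x)) u^{p-1}, then the Prüfer angle satisfies θ'(x) = 1 - (q(x)/λ²)·S_p^p(λ^{2/p}θ(x)) - (2r(x)/λ)·S_p^p(λ^{2/p}θ(x)) at points where u(x) ≠ 0. -/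
lemma hasDerivAt_sgn_rpow (p : ℝ) {t : ℝ} (ht : t ≠ 0) :
    HasDerivAt (fun s : ℝ => |s| ^ (p - 2) * s) ((p - 1) * |t| ^ (p - 2)) t := by
  rcases ht.lt_or_gt with h | h
  · have h2 := (Real.hasDerivAt_rpow_const (x := -t) (p := p - 1)
      (Or.inl (show -t ≠ 0 by intro h0; apply ht; linarith))).comp t (hasDerivAt_neg t)
    have h3 := h2.neg
    have hval : -((p - 1) * (-t) ^ (p - 1 - 1) * -1) = (p - 1) * |t| ^ (p - 2) := by
      rw [abs_of_neg h, show p - 1 - 1 = p - 2 by ring]; ring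
    rw [hval] at h3
    have hev : (fun s : ℝ => |s| ^ (p - 2) * s)
        =ᶠ[nhds t] (fun x : ℝ => -(((fun x : ℝ => x ^ (p - 1)) ∘ fun x : ℝ => -x) x)) := by
      filter_upwards [Iio_mem_nhds h] with s hs
      simp only [Function.comp_apply]
      rw [abs_of_neg hs, show p - 1 = p - 2 + 1 by ring,
        Real.rpow_add_one (show -s ≠ 0 by intro h0; apply absurd hs; simp; linarith)]
      ring
    exact h3.congr_of_eventuallyEq hev
  · have h2 := Real.hasDerivAt_rpow_const (x := t) (p := p - 1) (Or.inl h.ne')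
    have hval : (p - 1) * t ^ (p - 1 - 1) = (p - 1) * |t| ^ (p - 2) := by
      rw [abs_of_pos h, show p - 1 - 1 = p - 2 by ring]
    rw [hval] at h2
    have hev : (fun s : ℝ => |s| ^ (p - 2) * s) =ᶠ[nhds t] fun x : ℝ => x ^ (p - 1) := by
      filter_upwards [Ioi_mem_nhds h] with s hs
      rw [abs_of_pos hs, show p - 1 = p - 2 + 1 by ring, Real.rpow_add_one (ne_of_gt hs)]
    exact h2.congr_of_eventuallyEq hev

lemma abs_rpow_mul_sq (p t : ℝ) (hp : 0 < p) : |t| ^ (p - 2) * (t * t) = |t| ^ p := by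
  rcases eq_or_ne t 0 with rfl | ht
  · simp [Real.zero_rpow hp.ne']
  · have h2 : t * t = |t| * |t| := (abs_mul_abs_self t).symm
    rw [h2, ← mul_assoc, ← Real.rpow_add_one (abs_ne_zero.mpr ht),
      ← Real.rpow_add_one (abs_ne_zero.mpr ht), show p - 2 + 1 + 1 = p by ring]

/-- The Prüfer angle equation (2.3): if `u = c·S_p(λ^{2/p}θ)` and
`u' = λ^{2/p} c·S_p'(λ^{2/p}θ)` with `u` solving the energy-dependent
p-Laplacian equation, then wherever `u ≠ 0`,
`θ' = 1 - (q/λ²)|S_p|^p - (2r/λ)|S_p|^p`. -/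
theorem prufer_angle_equation (p lam : ℝ) (hp : 1 < p) (hlam : 0 < lam)
    (q r c θ u u' Sp Sp' : ℝ → ℝ)
    (hSp : ∀ t, HasDerivAt Sp (Sp' t) t)
    (hSpode : ∀ t, HasDerivAt (fun s => |Sp' s| ^ (p - 2) * Sp' s)
      (-((p - 1) * |Sp t| ^ (p - 2) * Sp t)) t)
    (hSpid : ∀ t, |Sp t| ^ p + |Sp' t| ^ p = 1)
    (hθ : Differentiable ℝ θ)
    (hu : ∀ x, u x = c x * Sp (lam ^ (2 / p) * θ x))
    (hu' : ∀ x, HasDerivAt u (u' x) x)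
    (hu'eq : ∀ x, u' x = lam ^ (2 / p) * c x * Sp' (lam ^ (2 / p) * θ x))
    (hueq : ∀ x, HasDerivAt (fun t => |u' t| ^ (p - 2) * u' t)
      (-((p - 1) * (lam ^ 2 - q x - 2 * lam * r x) * |u x| ^ (p - 2) * u x)) x) :
    ∀ x, u x ≠ 0 →
      deriv θ x = 1 - (q x / lam ^ 2) * |Sp (lam ^ (2 / p) * θ x)| ^ p
        - (2 * r x / lam) * |Sp (lam ^ (2 / p) * θ x)| ^ p := by
  intro x hx
  set m := lam ^ (2 / p) with hm_def
  have hp0 : (0:ℝ) < p := by linarith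
  have hm : 0 < m := Real.rpow_pos_of_pos hlam _
  have hmp : m ^ p = lam ^ 2 := by
    rw [hm_def, ← Real.rpow_natCast lam 2, ← Real.rpow_mul hlam.le]
    rw [div_mul_cancel₀ _ hp0.ne']
    norm_num
  have hc0 : c x ≠ 0 := fun h => hx (by rw [hu x, h, zero_mul])
  have hS0 : Sp (m * θ x) ≠ 0 := fun h => hx (by rw [hu x, h, mul_zero])
  have hsd : ∀ y, HasDerivAt (fun z => m * θ z) (m * deriv θ y) y :=
    fun y => ((hθ y).hasDerivAt).const_mul m
  have hSpc : ∀ y, HasDerivAt (fun z => Sp (m * θ z)) (Sp' (m * θ y) * (m * deriv θ y)) y :=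
    fun y => (hSp (m * θ y)).comp y (hsd y)
  have hScont : ContinuousAt (fun z => Sp (m * θ z)) x := (hSpc x).continuousAt
  have hnz : ∀ᶠ z in nhds x, Sp (m * θ z) ≠ 0 := hScont.eventually_ne hS0
  have hceq : c =ᶠ[nhds x] fun z => u z / Sp (m * θ z) := by
    filter_upwards [hnz] with z hz
    rw [hu z]
    exact (mul_div_cancel_right₀ _ hz).symm
  obtain ⟨c', hcd⟩ : ∃ c', HasDerivAt c c' x :=
    ⟨_, (((hu' x).div (hSpc x) hS0)).congr_of_eventuallyEq hceq⟩
  -- equation (1)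
  have h1 := hcd.mul (hSpc x)
  rw [show (c * fun z => Sp (m * θ z)) = u from funext fun z => (hu z).symm] at h1
  have eq1 := (hu' x).unique h1
  have eq1' : c' * Sp (m * θ x) = m * c x * Sp' (m * θ x) * (1 - deriv θ x) := by
    rw [hu'eq x] at eq1
    linear_combination -eq1
  -- pointwise identity for |u'|^(p-2) u'
  have hPhi : ∀ z, |u' z| ^ (p - 2) * u' z
      = m ^ (p - 1) * ((|c z| ^ (p - 2) * c z)
        * (|Sp' (m * θ z)| ^ (p - 2) * Sp' (m * θ z))) := by
    intro z
    rw [hu'eq z, abs_mul, abs_mul, abs_of_pos hm]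
    rw [Real.mul_rpow (mul_nonneg hm.le (abs_nonneg _)) (abs_nonneg _),
        Real.mul_rpow hm.le (abs_nonneg _)]
    rw [show m ^ (p - 1) = m ^ (p - 2) * m by
      rw [show p - 1 = p - 2 + 1 by ring, Real.rpow_add_one hm.ne']]
    ring
  -- equation (2)
  have h2' : HasDerivAt (fun z => |u' z| ^ (p - 2) * u' z)
      (m ^ (p - 1) * ((p - 1) * |c x| ^ (p - 2) * c'
          * (|Sp' (m * θ x)| ^ (p - 2) * Sp' (m * θ x))
        + |c x| ^ (p - 2) * c x
          * (-((p - 1) * |Sp (m * θ x)| ^ (p - 2) * Sp (m * θ x)) * (m * deriv θ x)))) x := by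
    have h2 := (((hasDerivAt_sgn_rpow p hc0).comp x hcd).mul
        ((hSpode (m * θ x)).comp x (hsd x))).const_mul (m ^ (p - 1))
    exact h2.congr_of_eventuallyEq (Filter.Eventually.of_forall hPhi)
  have eq2 := (hueq x).unique h2'
  have hux2 : |u x| ^ (p - 2) * u x
      = |c x| ^ (p - 2) * c x * (|Sp (m * θ x)| ^ (p - 2) * Sp (m * θ x)) := by
    rw [hu x, abs_mul, Real.mul_rpow (abs_nonneg _) (abs_nonneg _)]
    ring
  have hK : |c x| ^ (p - 2) ≠ 0 := (Real.rpow_pos_of_pos (abs_pos.mpr hc0) _).ne'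
  have hp1 : p - 1 ≠ 0 := by intro h; apply absurd hp; simp; linarith
  have hB : -((lam ^ 2 - q x - 2 * lam * r x)
        * (c x * (|Sp (m * θ x)| ^ (p - 2) * Sp (m * θ x))))
      = m ^ (p - 1) * (c' * (|Sp' (m * θ x)| ^ (p - 2) * Sp' (m * θ x)))
        - m ^ (p - 1) * m * (c x * (|Sp (m * θ x)| ^ (p - 2) * Sp (m * θ x))) * deriv θ x := by
    refine mul_left_cancel₀ (mul_ne_zero hp1 hK) ?_
    linear_combination eq2 + (p - 1) * (lam ^ 2 - q x - 2 * lam * r x) * hux2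
  have hEA := abs_rpow_mul_sq p (Sp (m * θ x)) hp0
  have hEA' := abs_rpow_mul_sq p (Sp' (m * θ x)) hp0
  have hMm : m ^ (p - 1) * m = lam ^ 2 := by
    have h5 : m ^ (p - 1) * m ^ (1:ℝ) = m ^ (p - 1 + 1) := (Real.rpow_add hm _ _).symm
    rw [Real.rpow_one] at h5
    rw [h5, show p - 1 + 1 = p by ring, hmp]
  have hC : -((lam ^ 2 - q x - 2 * lam * r x) * (c x * |Sp (m * θ x)| ^ p))
      = lam ^ 2 * (c x * |Sp' (m * θ x)| ^ p) * (1 - deriv θ x)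
        - lam ^ 2 * (c x * |Sp (m * θ x)| ^ p) * deriv θ x := by
    linear_combination Sp (m * θ x) * hB
      + m ^ (p - 1) * |Sp' (m * θ x)| ^ (p - 2) * Sp' (m * θ x) * eq1'
      - (-((lam ^ 2 - q x - 2 * lam * r x) * c x)
          + m ^ (p - 1) * m * c x * deriv θ x) * hEA
      - (-(m ^ (p - 1) * m * c x * (1 - deriv θ x))) * hEA'
      - (c x * |Sp (m * θ x)| ^ p * deriv θ x
          - c x * |Sp' (m * θ x)| ^ p * (1 - deriv θ x)) * hMm
  have hD : -((lam ^ 2 - q x - 2 * lam * r x) * |Sp (m * θ x)| ^ p)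
      = lam ^ 2 * |Sp' (m * θ x)| ^ p * (1 - deriv θ x)
        - lam ^ 2 * |Sp (m * θ x)| ^ p * deriv θ x :=
    mul_left_cancel₀ hc0 (by linear_combination hC)
  have key : lam ^ 2 * deriv θ x
      = lam ^ 2 - (q x + 2 * lam * r x) * |Sp (m * θ x)| ^ p := by
    linear_combination hD - lam ^ 2 * (deriv θ x - 1) * hSpid (m * θ x)
  have hl : lam ≠ 0 := hlam.ne'
  field_simp
  linear_combination key
end
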